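/- If lim_{j→∞} γ_j² > 0, then average-case L₂-approximation with Gaussian kernels suffers from the curse of dimensionality: there exist positive numbers C, ε₀, a such that n(ε,d) ≥ C(1+a)^d for all 0 < ε ≤ ε₀ and infinitely many d ∈ ℕ. -/

import Mathlib

open Filter

/-- `omegaOf x` is `ω` for shape parameter squared `x = γ²`:
`ω = 2γ²/(1+2γ²+√(1+4γ²))`. -/
noncomputable def omegaOf (x : ℝ) : ℝ := 2 * x / (1 + 2 * x + Real.sqrt (1 + 4 * x))

/-- Eigenvalues `λ_d(j) = ∏_{k=1}^d (1-ω_k) ω_k^{j_k}`, where `g k = γ_{k+1}²`. -/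
noncomputable def eigen (g : ℕ → ℝ) (d : ℕ) (j : Fin d → ℕ) : ℝ :=
  ∏ k : Fin d, (1 - omegaOf (g (k : ℕ))) * omegaOf (g (k : ℕ)) ^ (j k)

/-- The information complexity `n(ε,d)`: the least `n` such that some finite set `S` of
multi-indices with `|S| ≤ n` satisfies `∑_{j ∉ S} λ_d(j) ≤ ε²`. -/
noncomputable def infoComp (g : ℕ → ℝ) (ε : ℝ) (d : ℕ) : ℕ :=
  sInf {n : ℕ | ∃ S : Finset (Fin d → ℕ), S.card ≤ n ∧
    (∑' j : {j : Fin d → ℕ // j ∉ S}, eigen g d j.1) ≤ ε ^ 2}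

lemma omegaOf_eq {x : ℝ} (hx : 0 ≤ x) :
    omegaOf x = 1 - 2 / (Real.sqrt (1 + 4 * x) + 1) := by
  have h0 : (0:ℝ) ≤ 1 + 4 * x := by linarith
  have hs1 : 1 ≤ Real.sqrt (1 + 4 * x) := Real.one_le_sqrt.2 (by linarith)
  have hs2 : Real.sqrt (1 + 4 * x) ^ 2 = 1 + 4 * x := Real.sq_sqrt h0
  set s := Real.sqrt (1 + 4 * x)
  have hd1 : 1 + 2 * x + s ≠ 0 := by nlinarith
  have hd2 : s + 1 ≠ 0 := by nlinarith
  unfold omegaOf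
  field_simp
  have ht : Real.sqrt (1 + x * 4) = s := by rw [mul_comm]
  rw [ht]
  nlinarith [hs2]

lemma omegaOf_nonneg {x : ℝ} (hx : 0 ≤ x) : 0 ≤ omegaOf x := by
  have hs1 : 1 ≤ Real.sqrt (1 + 4 * x) := Real.one_le_sqrt.2 (by linarith)
  unfold omegaOf
  apply div_nonneg (by linarith)
  nlinarith

lemma omegaOf_lt_one {x : ℝ} (hx : 0 ≤ x) : omegaOf x < 1 := by
  have hs1 : 1 ≤ Real.sqrt (1 + 4 * x) := Real.one_le_sqrt.2 (by linarith)
  rw [omegaOf_eq hx]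
  have : 0 < 2 / (Real.sqrt (1 + 4 * x) + 1) := by positivity
  linarith

lemma omegaOf_pos {x : ℝ} (hx : 0 < x) : 0 < omegaOf x := by
  have hs1 : 1 ≤ Real.sqrt (1 + 4 * x) := Real.one_le_sqrt.2 (by linarith)
  unfold omegaOf
  apply div_pos (by linarith)
  nlinarith

lemma omegaOf_mono {x y : ℝ} (hx : 0 ≤ x) (hxy : x ≤ y) : omegaOf x ≤ omegaOf y := by
  have hy : 0 ≤ y := hx.trans hxy
  rw [omegaOf_eq hx, omegaOf_eq hy]
  have hs1 : 1 ≤ Real.sqrt (1 + 4 * x) := Real.one_le_sqrt.2 (by linarith)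
  have hsle : Real.sqrt (1 + 4 * x) ≤ Real.sqrt (1 + 4 * y) :=
    Real.sqrt_le_sqrt (by linarith)
  have h1 : 2 / (Real.sqrt (1 + 4 * y) + 1) ≤ 2 / (Real.sqrt (1 + 4 * x) + 1) := by
    apply div_le_div_of_nonneg_left (by norm_num) (by linarith) (by linarith)
  linarith

lemma geom_summable {w : ℝ} (h0 : 0 ≤ w) (h1 : w < 1) :
    Summable (fun j : ℕ => (1 - w) * w ^ j) :=
  (summable_geometric_of_lt_one h0 h1).mul_left _

lemma geom_tsum {w : ℝ} (h0 : 0 ≤ w) (h1 : w < 1) :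
    (∑' j : ℕ, (1 - w) * w ^ j) = 1 := by
  rw [tsum_mul_left, tsum_geometric_of_lt_one h0 h1,
    mul_inv_cancel₀ (by linarith : (1:ℝ) - w ≠ 0)]

lemma eigen_nonneg (g : ℕ → ℝ) (hpos : ∀ j, 0 < g j) (d : ℕ) (j : Fin d → ℕ) :
    0 ≤ eigen g d j := by
  apply Finset.prod_nonneg
  intro k _
  have h0 := omegaOf_nonneg (hpos (k : ℕ)).le
  have h1 := omegaOf_lt_one (hpos (k : ℕ)).le
  have := pow_nonneg h0 (j k)
  nlinarith

lemma eigen_summable_tsum (g : ℕ → ℝ) (hpos : ∀ j, 0 < g j) (d : ℕ) :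
    Summable (eigen g d) ∧ (∑' j, eigen g d j) = 1 := by
  induction d generalizing g with
  | zero =>
    haveI : Unique (Fin 0 → ℕ) := ⟨⟨fun i => i.elim0⟩, fun f => funext fun i => i.elim0⟩
    constructor
    · exact .of_finite
    · rw [tsum_eq_single default (fun b hb => absurd (Subsingleton.elim b default) hb)]
      simp [eigen]
  | succ d ih =>
    set g' : ℕ → ℝ := fun n => g (n + 1) with hg'
    obtain ⟨hs, ht⟩ := ih g' (fun j => hpos _)
    set w := omegaOf (g 0) with hw
    have hw0 : 0 ≤ w := omegaOf_nonneg (hpos 0).le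
    have hw1 : w < 1 := omegaOf_lt_one (hpos 0).le
    have hu : Summable (fun j : ℕ => (1 - w) * w ^ j) := geom_summable hw0 hw1
    have hunn : ∀ j : ℕ, 0 ≤ (1 - w) * w ^ j := fun j => by
      have := pow_nonneg hw0 j; nlinarith
    have hvnn : ∀ j, 0 ≤ eigen g' d j := eigen_nonneg g' (fun j => hpos _) d
    set e := Fin.consEquiv (fun _ : Fin (d + 1) => ℕ)
    have hkey : ∀ p : ℕ × (Fin d → ℕ),
        eigen g (d + 1) (e p) = (1 - w) * w ^ p.1 * eigen g' d p.2 := by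
      rintro ⟨a, b⟩
      show eigen g (d+1) (Fin.cons a b) = _
      unfold eigen
      rw [Fin.prod_univ_succ]
      simp [hg', Fin.val_succ]
      exact Or.inl rfl
    have hsum2 : Summable (fun p : ℕ × (Fin d → ℕ) =>
        (1 - w) * w ^ p.1 * eigen g' d p.2) :=
      Summable.mul_of_nonneg hu hs hunn hvnn
    have hse : Summable (eigen g (d + 1)) := by
      rw [← e.summable_iff]
      exact hsum2.congr (fun p => (hkey p).symm)
    refine ⟨hse, ?_⟩
    have hmul := tsum_mul_tsum_of_summable_norm
      (hu.congr (fun j => (Real.norm_of_nonneg (hunn j)).symm))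
      (hs.congr (fun j => (Real.norm_of_nonneg (hvnn j)).symm))
    rw [geom_tsum hw0 hw1, ht, one_mul] at hmul
    rw [← e.tsum_eq, tsum_congr hkey, ← hmul]

/-- If `lim_j γ_j² > 0` then the problem suffers from the curse of dimensionality. -/
theorem stmt5 (g : ℕ → ℝ) (hpos : ∀ j, 0 < g j) (hanti : Antitone g)
    (L : ℝ) (hL : Filter.Tendsto g Filter.atTop (nhds L)) (hLpos : 0 < L) :
    ∃ C ε₀ a : ℝ, 0 < C ∧ 0 < ε₀ ∧ 0 < a ∧
      ∀ ε : ℝ, 0 < ε → ε ≤ ε₀ →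
        {d : ℕ | 1 ≤ d ∧ C * (1 + a) ^ d ≤ (infoComp g ε d : ℝ)}.Infinite := by
  set w := omegaOf L with hw
  have hw0 : 0 < w := omegaOf_pos hLpos
  have hw1 : w < 1 := omegaOf_lt_one hLpos.le
  have hgL : ∀ k, L ≤ g k := fun k => hanti.le_of_tendsto hL k
  refine ⟨3/4, 1/2, w / (1 - w), by norm_num, by norm_num,
    div_pos hw0 (by linarith), ?_⟩
  intro ε hε hε2
  have hne1 : (1:ℝ) - w ≠ 0 := by linarith
  have h1a : 1 + w / (1 - w) = (1 - w)⁻¹ := by field_simp; ring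
  have key : ∀ d : ℕ, (3/4 : ℝ) * (1 + w / (1 - w)) ^ d ≤ (infoComp g ε d : ℝ) := by
    intro d
    obtain ⟨hsum, htsum⟩ := eigen_summable_tsum g hpos d
    -- eigen bound
    have heigle : ∀ j, eigen g d j ≤ (1 - w) ^ d := by
      intro j
      unfold eigen
      calc ∏ k : Fin d, (1 - omegaOf (g (k : ℕ))) * omegaOf (g (k : ℕ)) ^ (j k)
          ≤ ∏ _k : Fin d, (1 - w) := by
            apply Finset.prod_le_prod
            · intro k _
              have h0 := omegaOf_nonneg (hpos (k : ℕ)).le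
              have h1 := omegaOf_lt_one (hpos (k : ℕ)).le
              have := pow_nonneg h0 (j k)
              nlinarith
            · intro k _
              have h0 := omegaOf_nonneg (hpos (k : ℕ)).le
              have h1 := omegaOf_lt_one (hpos (k : ℕ)).le
              have hmono : w ≤ omegaOf (g (k : ℕ)) := omegaOf_mono hLpos.le (hgL _)
              have hp1 : omegaOf (g (k : ℕ)) ^ (j k) ≤ 1 :=
                pow_le_one₀ h0 h1.le
              have := pow_nonneg h0 (j k)
              nlinarith
        _ = (1 - w) ^ d := by rw [Finset.prod_const, Finset.card_univ, Fintype.card_fin]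
    -- set of admissible n is nonempty
    have hne : {n : ℕ | ∃ S : Finset (Fin d → ℕ), S.card ≤ n ∧
        (∑' j : {j : Fin d → ℕ // j ∉ S}, eigen g d j.1) ≤ ε ^ 2}.Nonempty := by
      have htend := tendsto_tsum_compl_atTop_zero (eigen g d)
      have hev := (tendsto_order.1 htend).2 (ε ^ 2) (by positivity)
      obtain ⟨S, hS⟩ := hev.exists
      exact ⟨S.card, S, le_refl _, hS.le⟩
    have hmem := Nat.sInf_mem hne
    obtain ⟨S, hcard, htail⟩ := hmem
    -- lower bound on the head sum
    have hhead : (1 : ℝ) - ε ^ 2 ≤ ∑ j ∈ S, eigen g d j := by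
      have h2 := Summable.sum_add_tsum_compl (s := S) hsum
      rw [htsum] at h2
      have htail' : (∑' (x : ↑(↑S : Set (Fin d → ℕ))ᶜ), eigen g d ↑x) ≤ ε ^ 2 := htail
      linarith
    have hε4 : ε ^ 2 ≤ 1/4 := by nlinarith
    have hS34 : (3/4 : ℝ) ≤ ∑ j ∈ S, eigen g d j := by linarith
    have hub : (∑ j ∈ S, eigen g d j) ≤ (S.card : ℝ) * (1 - w) ^ d := by
      have := Finset.sum_le_card_nsmul S (eigen g d) ((1 - w) ^ d)
        (fun j _ => heigle j)
      simpa [nsmul_eq_mul] using this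
    have hpow : (0:ℝ) < (1 - w) ^ d := pow_pos (by linarith) d
    rw [h1a, inv_pow, ← div_eq_mul_inv, div_le_iff₀ hpow]
    have hSn : (S.card : ℝ) ≤ (infoComp g ε d : ℝ) := by
      exact_mod_cast hcard
    calc (3/4 : ℝ) ≤ (S.card : ℝ) * (1 - w) ^ d := le_trans hS34 hub
      _ ≤ (infoComp g ε d : ℝ) * (1 - w) ^ d := by
          apply mul_le_mul_of_nonneg_right hSn hpow.le
  apply Set.Infinite.mono (s := Set.Ici 1)
  · intro d hd
    exact ⟨hd, key d⟩
  · exact Set.Ici_infinite 1
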